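/- With $IT$ as in the previous statement, if $\Sigma_L = A^-$, $\Sigma_R = -A^+$ (where $2A^{\pm} = A \pm \bar A$ for the symmetric matrix $A$), and $H_R I_{C2F} = I_{F2C}^T H_L$, then $IT = -w^T(\bar A \otimes X)w$ where $w = (u, v)^T$ and $X = \begin{pmatrix} H_L & -H_L I_{F2C} \\ -H_R I_{C2F} & H_R \end{pmatrix}$ (up to the appropriate block reordering identifying $\mathbb{R}^k \otimes \mathbb{R}^{n_L+n_R}$ with $\mathbb{R}^{kn_L} \times \mathbb{R}^{kn_R}$). Consequently, if additionally $X \geq 0$ then $IT \leq 0$. -/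

import Mathlib

open Matrix Kronecker

private lemma kron_smul_sub {k m n : ℕ} (M N : Matrix (Fin k) (Fin k) ℝ)
    (B : Matrix (Fin m) (Fin n) ℝ) (x : Fin k × Fin m → ℝ) (y : Fin k × Fin n → ℝ) :
    x ⬝ᵥ ((((1/2 : ℝ) • (M - N)) ⊗ₖ B) *ᵥ y)
      = 1/2 * (x ⬝ᵥ ((M ⊗ₖ B) *ᵥ y)) - 1/2 * (x ⬝ᵥ ((N ⊗ₖ B) *ᵥ y)) := by
  have h : ((1/2 : ℝ) • (M - N)) ⊗ₖ B
      = (1/2 : ℝ) • (M ⊗ₖ B) - (1/2 : ℝ) • (N ⊗ₖ B) := by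
    ext ⟨i, s⟩ ⟨j, t⟩
    simp [kroneckerMap_apply, Matrix.smul_apply, Matrix.sub_apply, smul_eq_mul]
    ring
  rw [h, Matrix.sub_mulVec, Matrix.smul_mulVec, Matrix.smul_mulVec,
    dotProduct_sub, dotProduct_smul, dotProduct_smul, smul_eq_mul, smul_eq_mul]

private lemma neg_kron_qf {k m n : ℕ} (M : Matrix (Fin k) (Fin k) ℝ)
    (B : Matrix (Fin m) (Fin n) ℝ) (x : Fin k × Fin m → ℝ) (y : Fin k × Fin n → ℝ) :
    x ⬝ᵥ (((-M) ⊗ₖ B) *ᵥ y) = -(x ⬝ᵥ ((M ⊗ₖ B) *ᵥ y)) := by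
  have h : (-M) ⊗ₖ B = -(M ⊗ₖ B) := by
    ext ⟨i, s⟩ ⟨j, t⟩; simp [kroneckerMap_apply]
  rw [h, Matrix.neg_mulVec, dotProduct_neg]

private lemma kron_neg_right {k m n : ℕ} (M : Matrix (Fin k) (Fin k) ℝ)
    (B : Matrix (Fin m) (Fin n) ℝ) (x : Fin k × Fin m → ℝ) (y : Fin k × Fin n → ℝ) :
    x ⬝ᵥ ((M ⊗ₖ (-B)) *ᵥ y) = -(x ⬝ᵥ ((M ⊗ₖ B) *ᵥ y)) := by
  have h : M ⊗ₖ (-B) = -(M ⊗ₖ B) := by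
    ext ⟨i, s⟩ ⟨j, t⟩; simp [kroneckerMap_apply]
  rw [h, Matrix.neg_mulVec, dotProduct_neg]

private lemma block_qf {k nL nR : ℕ} (Ab : Matrix (Fin k) (Fin k) ℝ)
    (B11 : Matrix (Fin nL) (Fin nL) ℝ) (B12 : Matrix (Fin nL) (Fin nR) ℝ)
    (B21 : Matrix (Fin nR) (Fin nL) ℝ) (B22 : Matrix (Fin nR) (Fin nR) ℝ)
    (u : Fin k × Fin nL → ℝ) (v : Fin k × Fin nR → ℝ)
    (w : Fin k × (Fin nL ⊕ Fin nR) → ℝ)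
    (hw : ∀ p, w p = Sum.elim (fun j => u (p.1, j)) (fun j => v (p.1, j)) p.2) :
    w ⬝ᵥ ((Ab ⊗ₖ fromBlocks B11 B12 B21 B22) *ᵥ w)
      = u ⬝ᵥ ((Ab ⊗ₖ B11) *ᵥ u) + u ⬝ᵥ ((Ab ⊗ₖ B12) *ᵥ v)
      + v ⬝ᵥ ((Ab ⊗ₖ B21) *ᵥ u) + v ⬝ᵥ ((Ab ⊗ₖ B22) *ᵥ v) := by
  simp only [dotProduct, mulVec, Fintype.sum_prod_type, Fintype.sum_sum_type, hw,
    Sum.elim_inl, Sum.elim_inr, kroneckerMap_apply, fromBlocks_apply₁₁, fromBlocks_apply₁₂,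
    fromBlocks_apply₂₁, fromBlocks_apply₂₂, mul_add, add_mul, Finset.sum_add_distrib,
    Finset.mul_sum, Finset.sum_mul]
  ring_nf

private lemma one_kron_qf_nonneg {k : ℕ} {n : Type*} [Fintype n] (X : Matrix n n ℝ)
    (hX : X.PosSemidef) (z : Fin k × n → ℝ) :
    0 ≤ z ⬝ᵥ (((1 : Matrix (Fin k) (Fin k) ℝ) ⊗ₖ X) *ᵥ z) := by
  have h : z ⬝ᵥ (((1 : Matrix (Fin k) (Fin k) ℝ) ⊗ₖ X) *ᵥ z)
      = ∑ i : Fin k, (fun s => z (i, s)) ⬝ᵥ (X *ᵥ (fun s => z (i, s))) := by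
    simp only [dotProduct, mulVec, Fintype.sum_prod_type, kroneckerMap_apply, one_apply,
      ite_mul, one_mul, zero_mul, mul_ite, mul_zero, Finset.mul_sum]
    congr 1; ext i
    rw [Finset.sum_comm]
    simp [Finset.sum_ite_eq', Finset.mul_sum]
  rw [h]
  exact Finset.sum_nonneg fun i _ => by simpa using hX.dotProduct_mulVec_nonneg (fun s => z (i, s))

/-- Lemma 2 computation: with the characteristic choice `Σ_L = A⁻`,
`Σ_R = -A⁺` and SBP-preserving interpolation, the interface term equals
`-wᵀ(Ā ⊗ X)w`; hence `X ≥ 0` implies `IT ≤ 0`. -/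
theorem stmt_14 {k nL nR : ℕ}
    (A R : Matrix (Fin k) (Fin k) ℝ) (d : Fin k → ℝ)
    (hR : R * Rᵀ = 1) (hA : A = R * diagonal d * Rᵀ)
    (Abar Aplus Aminus SigL SigR : Matrix (Fin k) (Fin k) ℝ)
    (hAbar : Abar = R * diagonal (fun i => |d i|) * Rᵀ)
    (hAplus : Aplus = (1 / 2 : ℝ) • (A + Abar))
    (hAminus : Aminus = (1 / 2 : ℝ) • (A - Abar))
    (hSigL : SigL = Aminus) (hSigR : SigR = -Aplus)
    (HL : Matrix (Fin nL) (Fin nL) ℝ) (HR : Matrix (Fin nR) (Fin nR) ℝ)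
    (IF2C : Matrix (Fin nL) (Fin nR) ℝ) (IC2F : Matrix (Fin nR) (Fin nL) ℝ)
    (hHL : HL.PosDef) (hHR : HR.PosDef)
    (hSBP : HR * IC2F = IF2Cᵀ * HL)
    (u : Fin k × Fin nL → ℝ) (v : Fin k × Fin nR → ℝ)
    (X : Matrix (Fin nL ⊕ Fin nR) (Fin nL ⊕ Fin nR) ℝ)
    (hX : X = Matrix.fromBlocks HL (-(HL * IF2C)) (-(HR * IC2F)) HR)
    (w : Fin k × (Fin nL ⊕ Fin nR) → ℝ)
    (hw : ∀ p, w p = Sum.elim (fun j => u (p.1, j)) (fun j => v (p.1, j)) p.2)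
    (IT : ℝ)
    (hIT : IT =
      -(u ⬝ᵥ ((A ⊗ₖ HL) *ᵥ u)) + v ⬝ᵥ ((A ⊗ₖ HR) *ᵥ v)
      + 2 * (u ⬝ᵥ ((SigL ⊗ₖ HL) *ᵥ u)) + 2 * (v ⬝ᵥ ((SigR ⊗ₖ HR) *ᵥ v))
      - u ⬝ᵥ ((SigL ⊗ₖ (HL * IF2C)) *ᵥ v)
      - v ⬝ᵥ ((SigR ⊗ₖ (HR * IC2F)) *ᵥ u)
      - u ⬝ᵥ ((SigR ⊗ₖ (IC2Fᵀ * HR)) *ᵥ v)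
      - v ⬝ᵥ ((SigL ⊗ₖ (IF2Cᵀ * HL)) *ᵥ u)) :
    IT = -(w ⬝ᵥ ((Abar ⊗ₖ X) *ᵥ w)) ∧ (X.PosSemidef → IT ≤ 0) := by
  -- symmetry of HL, HR
  have hHLs : HLᵀ = HL := by simpa using hHL.1.eq
  have hHRs : HRᵀ = HR := by simpa using hHR.1.eq
  -- cross identities
  have c1 : IC2Fᵀ * HR = HL * IF2C := by
    have : IC2Fᵀ * HRᵀ = (HR * IC2F)ᵀ := (Matrix.transpose_mul _ _).symm
    rw [hHRs] at this
    rw [this, hSBP, Matrix.transpose_mul, Matrix.transpose_transpose, hHLs]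
  have c2 : IF2Cᵀ * HL = HR * IC2F := hSBP.symm
  -- express SigL, SigR in half-difference form
  have hSigL' : SigL = (1/2 : ℝ) • (A - Abar) := by
    rw [hSigL, hAminus]
  have hSigR' : SigR = (1/2 : ℝ) • ((-A) - Abar) := by
    rw [hSigR, hAplus]
    ext i j
    simp [Matrix.smul_apply, Matrix.add_apply, Matrix.sub_apply, Matrix.neg_apply,
      smul_eq_mul]
    ring
  -- expand IT
  rw [c1, c2, hSigL', hSigR'] at hIT
  rw [kron_smul_sub, kron_smul_sub, kron_smul_sub, kron_smul_sub, kron_smul_sub,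
    kron_smul_sub, neg_kron_qf, neg_kron_qf, neg_kron_qf] at hIT
  -- expand the block quadratic form
  have hblock : w ⬝ᵥ ((Abar ⊗ₖ X) *ᵥ w)
      = u ⬝ᵥ ((Abar ⊗ₖ HL) *ᵥ u) - u ⬝ᵥ ((Abar ⊗ₖ (HL * IF2C)) *ᵥ v)
      - v ⬝ᵥ ((Abar ⊗ₖ (HR * IC2F)) *ᵥ u) + v ⬝ᵥ ((Abar ⊗ₖ HR) *ᵥ v) := by
    rw [hX, block_qf Abar _ _ _ _ u v w hw, kron_neg_right, kron_neg_right]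
    ring
  have hmain : IT = -(w ⬝ᵥ ((Abar ⊗ₖ X) *ᵥ w)) := by
    rw [hblock, hIT]; ring
  refine ⟨hmain, fun hXpsd => ?_⟩
  -- positivity: Abar = S Sᵀ with S = R √diag
  set S : Matrix (Fin k) (Fin k) ℝ := R * diagonal (fun i => Real.sqrt |d i|) with hSdef
  have hDD : diagonal (fun i => Real.sqrt |d i|) * diagonal (fun i => Real.sqrt |d i|)
      = diagonal (fun i => |d i|) := by
    have hf : (fun i : Fin k => Real.sqrt |d i| * Real.sqrt |d i|) = fun i => |d i| :=
      funext fun i => Real.mul_self_sqrt (abs_nonneg _)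
    rw [Matrix.diagonal_mul_diagonal, hf]
  have hS : S * Sᵀ = Abar := by
    rw [hSdef, hAbar, Matrix.transpose_mul, Matrix.diagonal_transpose,
      Matrix.mul_assoc, ← Matrix.mul_assoc (diagonal _), hDD, Matrix.mul_assoc]
  have hPt : (S ⊗ₖ (1 : Matrix (Fin nL ⊕ Fin nR) (Fin nL ⊕ Fin nR) ℝ))ᵀ
      = Sᵀ ⊗ₖ (1 : Matrix (Fin nL ⊕ Fin nR) (Fin nL ⊕ Fin nR) ℝ) := by
    rw [← kroneckerMap_transpose, Matrix.transpose_one]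
  have hfac : Abar ⊗ₖ X
      = (S ⊗ₖ (1 : Matrix (Fin nL ⊕ Fin nR) (Fin nL ⊕ Fin nR) ℝ))
        * (((1 : Matrix (Fin k) (Fin k) ℝ) ⊗ₖ X)
        * (Sᵀ ⊗ₖ (1 : Matrix (Fin nL ⊕ Fin nR) (Fin nL ⊕ Fin nR) ℝ))) := by
    rw [← Matrix.mul_kronecker_mul, ← Matrix.mul_kronecker_mul, Matrix.one_mul, hS]
    simp
  have hnn : 0 ≤ w ⬝ᵥ ((Abar ⊗ₖ X) *ᵥ w) := by
    rw [hfac, ← Matrix.mulVec_mulVec, ← Matrix.mulVec_mulVec,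
      Matrix.dotProduct_mulVec]
    have hv : w ᵥ* (S ⊗ₖ (1 : Matrix (Fin nL ⊕ Fin nR) (Fin nL ⊕ Fin nR) ℝ))
        = (Sᵀ ⊗ₖ (1 : Matrix (Fin nL ⊕ Fin nR) (Fin nL ⊕ Fin nR) ℝ)) *ᵥ w := by
      rw [← hPt, ← Matrix.vecMul_transpose, Matrix.transpose_transpose]
    rw [hv]
    exact one_kron_qf_nonneg X hXpsd _
  rw [hmain]
  linarith
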